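/- For every k ∈ ℝ³, the Weyl walk symbol W(k) = Σ_{i=1}^{4} (exp(i (hᵢ·k)) • Aᵢ + exp(−i (hᵢ·k)) • Bᵢ) is a unitary 2×2 complex matrix (i.e. W(k) ∈ Matrix.unitaryGroup (Fin 2) ℂ). -/

import Mathlib

open Matrix Complex

/-- `η⁺ = (1+i)/4`. -/
noncomputable def etaP : ℂ := (1 + Complex.I) / 4
/-- `η⁻ = (1−i)/4`. -/
noncomputable def etaM : ℂ := (1 - Complex.I) / 4

/-- Transition matrices `A₁, A₂, A₃, A₄` of the Weyl walk. -/
noncomputable def WeylA : Fin 4 → Matrix (Fin 2) (Fin 2) ℂ :=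
  ![!![etaP, 0; etaP, 0], !![0, etaP; 0, etaP],
    !![0, -etaP; 0, etaP], !![etaP, 0; -etaP, 0]]

/-- Transition matrices `B₁, B₂, B₃, B₄` of the Weyl walk. -/
noncomputable def WeylB : Fin 4 → Matrix (Fin 2) (Fin 2) ℂ :=
  ![!![0, -etaM; 0, etaM], !![etaM, 0; -etaM, 0],
    !![etaM, 0; etaM, 0], !![0, etaM; 0, etaM]]

/-- BCC generators `h₁ = (1,1,1)`, `h₂ = (1,−1,−1)`, `h₃ = (−1,1,−1)`, `h₄ = (−1,−1,1)`. -/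
def bccH : Fin 4 → Fin 3 → ℝ :=
  ![![1, 1, 1], ![1, -1, -1], ![-1, 1, -1], ![-1, -1, 1]]

/-- The Weyl walk symbol `W(k) = Σᵢ (e^{i hᵢ·k} Aᵢ + e^{−i hᵢ·k} Bᵢ)`. -/
noncomputable def WeylSymbol (k : Fin 3 → ℝ) : Matrix (Fin 2) (Fin 2) ℂ :=
  ∑ i : Fin 4,
    (Complex.exp (Complex.I * ((bccH i ⬝ᵥ k : ℝ) : ℂ)) • WeylA i
      + Complex.exp (-(Complex.I * ((bccH i ⬝ᵥ k : ℝ) : ℂ))) • WeylB i)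

set_option maxHeartbeats 1000000 in
/-- The Weyl walk symbol is unitary for every `k ∈ ℝ³`. -/
theorem weylSymbol_mem_unitaryGroup :
    ∀ k : Fin 3 → ℝ, WeylSymbol k ∈ Matrix.unitaryGroup (Fin 2) ℂ := by
  intro k
  rw [Matrix.mem_unitaryGroup_iff]
  set a : ℂ := Complex.exp (Complex.I * ((k 0 : ℝ) : ℂ)) with hadef
  set b : ℂ := Complex.exp (Complex.I * ((k 1 : ℝ) : ℂ)) with hbdef
  set c : ℂ := Complex.exp (Complex.I * ((k 2 : ℝ) : ℂ)) with hcdef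
  set a' : ℂ := Complex.exp (-(Complex.I * ((k 0 : ℝ) : ℂ))) with ha'def
  set b' : ℂ := Complex.exp (-(Complex.I * ((k 1 : ℝ) : ℂ))) with hb'def
  set c' : ℂ := Complex.exp (-(Complex.I * ((k 2 : ℝ) : ℂ))) with hc'def
  have ha : a * a' = 1 := by rw [hadef, ha'def, ← Complex.exp_add]; simp
  have hb : b * b' = 1 := by rw [hbdef, hb'def, ← Complex.exp_add]; simp
  have hc : c * c' = 1 := by rw [hcdef, hc'def, ← Complex.exp_add]; simp
  have hI : Complex.I * Complex.I = (-1 : ℂ) := Complex.I_mul_I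
  have split : ∀ x y z : ℂ, Complex.exp (Complex.I * (x + y + z))
      = Complex.exp (Complex.I * x) * Complex.exp (Complex.I * y) * Complex.exp (Complex.I * z) := by
    intro x y z
    rw [mul_add, mul_add, Complex.exp_add, Complex.exp_add]
  have nsplit : ∀ x y z : ℂ, Complex.exp (-(Complex.I * (x + y + z)))
      = Complex.exp (-(Complex.I * x)) * Complex.exp (-(Complex.I * y))
        * Complex.exp (-(Complex.I * z)) := by
    intro x y z
    rw [show -(Complex.I * (x + y + z))
        = -(Complex.I * x) + -(Complex.I * y) + -(Complex.I * z) by ring,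
      Complex.exp_add, Complex.exp_add]
  have negflip : ∀ r : ℝ, Complex.exp (Complex.I * (-(r : ℂ))) = Complex.exp (-(Complex.I * (r : ℂ))) := by
    intro r; rw [mul_neg]
  have negflip' : ∀ r : ℝ, Complex.exp (-(Complex.I * (-(r : ℂ)))) = Complex.exp (Complex.I * (r : ℂ)) := by
    intro r; rw [mul_neg, neg_neg]
  have hs : ∀ r : ℝ, star (Complex.exp (Complex.I * (r : ℂ))) = Complex.exp (-(Complex.I * (r : ℂ))) := by
    intro r
    rw [Complex.star_def, ← Complex.exp_conj, _root_.map_mul, Complex.conj_I,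
      Complex.conj_ofReal, neg_mul]
  have hs' : ∀ r : ℝ, star (Complex.exp (-(Complex.I * (r : ℂ)))) = Complex.exp (Complex.I * (r : ℂ)) := by
    intro r
    rw [← hs r, star_star]
  have hsp : star etaP = etaM := by
    rw [etaP, etaM, Complex.star_def]
    simp [map_ofNat, sub_eq_add_neg]
  have hsm : star etaM = etaP := by
    rw [← hsp, star_star]
  have hca : (starRingEnd ℂ) a = a' := hs (k 0)
  have hcb : (starRingEnd ℂ) b = b' := hs (k 1)
  have hcc : (starRingEnd ℂ) c = c' := hs (k 2)
  have hca' : (starRingEnd ℂ) a' = a := hs' (k 0)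
  have hcb' : (starRingEnd ℂ) b' = b := hs' (k 1)
  have hcc' : (starRingEnd ℂ) c' = c := hs' (k 2)
  have hW : WeylSymbol k =
      !![etaP*(a*b*c) + etaP*(a'*b'*c) + etaM*(a'*b*c) + etaM*(a*b'*c),
         etaP*(a*b'*c') - etaP*(a'*b*c') + etaM*(a*b*c') - etaM*(a'*b'*c');
         etaP*(a*b*c) - etaP*(a'*b'*c) + etaM*(a*b'*c) - etaM*(a'*b*c),
         etaP*(a*b'*c') + etaP*(a'*b*c') + etaM*(a'*b'*c') + etaM*(a*b*c')] := by
    ext i j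
    fin_cases i <;> fin_cases j <;>
    · simp [WeylSymbol, Fin.sum_univ_four, WeylA, WeylB, bccH, dotProduct,
        Fin.sum_univ_three, Matrix.add_apply, Matrix.smul_apply, smul_eq_mul,
        Matrix.vecHead, Matrix.vecTail, Function.comp]
      try simp only [split, nsplit, negflip, negflip', ← hadef, ← hbdef, ← hcdef,
        ← ha'def, ← hb'def, ← hc'def]
      ring
  have hWs : star (WeylSymbol k) =
      !![etaM*(a'*b'*c') + etaM*(a*b*c') + etaP*(a*b'*c') + etaP*(a'*b*c'),
         etaM*(a'*b'*c') - etaM*(a*b*c') + etaP*(a'*b*c') - etaP*(a*b'*c');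
         etaM*(a'*b*c) - etaM*(a*b'*c) + etaP*(a'*b'*c) - etaP*(a*b*c),
         etaM*(a'*b*c) + etaM*(a*b'*c) + etaP*(a'*b'*c) + etaP*(a*b*c)] := by
    rw [Matrix.star_eq_conjTranspose, hW]
    ext i j
    fin_cases i <;> fin_cases j <;>
    · simp [Matrix.conjTranspose_apply, star_add, star_sub, star_mul', hs, hs', hsp, hsm]
      try simp only [hs, hs', hsp, hsm, hca, hcb, hcc, hca', hcb', hcc', ← hadef, ← hbdef, ← hcdef, ← ha'def, ← hb'def, ← hc'def]
      try ring
  rw [hWs, hW, Matrix.mul_fin_two, Matrix.one_fin_two]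
  ext i j
  fin_cases i <;> fin_cases j <;>
  · simp [Matrix.cons_val_zero, Matrix.cons_val_one, Matrix.head_cons, Matrix.one_apply, etaP, etaM]
    try rw [etaP, etaM]
    first
    | linear_combination
        ((1/4:ℂ)*c*b'*b'*c' + (1/4:ℂ)*c*b'*b'*c'*Complex.I*Complex.I
          + (1/2:ℂ)*b*c*b'*c' + (-1/2:ℂ)*b*c*b'*c'*Complex.I*Complex.I
          + (1/4:ℂ)*b*b*c*c' + (1/4:ℂ)*b*b*c*c'*Complex.I*Complex.I) * ha
        + ((1/2:ℂ)*c*c' + (-1/2:ℂ)*c*c'*Complex.I*Complex.I) * hb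
        + ((1/2:ℂ) + (-1/2:ℂ)*Complex.I*Complex.I + (1/4:ℂ)*b'*b'
          + (1/4:ℂ)*b'*b'*Complex.I*Complex.I + (1/4:ℂ)*b*b
          + (1/4:ℂ)*b*b*Complex.I*Complex.I) * hc
        + ((-1/2:ℂ) + (1/4:ℂ)*b'*b' + (1/4:ℂ)*b*b) * hI
    | ring
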